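/- arXiv:1503.07685 — 3 statements merged into one kernel-verified Lean document; each statement's English description precedes it below -/
import Mathlib

section
/- Let M, P be positive integers, and let v : Fin M → ℝ³ (triangle centers of mass), n : Fin M → ℝ³ (unit normals, ‖n_k‖ = 1), a : Fin M → ℝ with a_k > 0 (triangle areas), together with target data w : Fin P → ℝ³, m : Fin P → ℝ³ with ‖m_j‖ = 1, b : Fin P → ℝ with b_j > 0, and g : Fin P → ℝ. Fix γ_f, γ_W > 0 and define the discrete L² matching energy E : (Fin M → ℝ) → ℝ by E(f) = (γ_f/2) Σ_k a_k f_k² + (γ_W/2) [ Σ_{k,l} a_k a_l k((v_k,n_k,f_k),(v_l,n_l,f_l)) − 2 Σ_{k,j} a_k b_j k((v_k,n_k,f_k),(w_j,m_j,g_j)) + Σ_{j,j'} b_j b_{j'} k((w_j,m_j,g_j),(w_{j'},m_{j'},g_{j'})) ]. Then E attains its infimum: there exists f* : Fin M → ℝ such that E(f*) ≤ E(f) for all f : Fin M → ℝ. -/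
open MeasureTheory Filter Topology
open scoped RealInnerProductSpace

noncomputable section

/-- The 3-dimensional Euclidean space in which the fshapes live. -/
abbrev E3 := EuclideanSpace ℝ (Fin 3)

/-- The Gaussian kernel on `ℝ³ × ℝ³ × ℝ` with parameters `σe, σt, σf`, a 2-plane being
identified with a choice of unit normal vector. -/
def kern (σe σt σf : ℝ) (p q : E3 × E3 × ℝ) : ℝ :=
  Real.exp (-‖p.1 - q.1‖ ^ 2 / σe ^ 2) *
    Real.exp (-(2 * (1 - ⟪p.2.1, q.2.1⟫ ^ 2)) / σt ^ 2) *
    Real.exp (-(p.2.2 - q.2.2) ^ 2 / σf ^ 2)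

lemma kern_pos (σe σt σf : ℝ) (p q : E3 × E3 × ℝ) : 0 < kern σe σt σf p q := by
  unfold kern; positivity

lemma kern_le_one (σe σt σf : ℝ) (p q : E3 × E3 × ℝ)
    (hp : ‖p.2.1‖ = 1) (hq : ‖q.2.1‖ = 1) : kern σe σt σf p q ≤ 1 := by
  have hin : |⟪p.2.1, q.2.1⟫| ≤ 1 := by
    have := abs_real_inner_le_norm p.2.1 q.2.1
    rwa [hp, hq, one_mul] at this
  have hsq : ⟪p.2.1, q.2.1⟫ ^ 2 ≤ 1 := by
    nlinarith [sq_abs (⟪p.2.1, q.2.1⟫), abs_nonneg (⟪p.2.1, q.2.1⟫)]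
  unfold kern
  have h1 : Real.exp (-‖p.1 - q.1‖ ^ 2 / σe ^ 2) ≤ 1 := by
    rw [Real.exp_le_one_iff]
    exact div_nonpos_of_nonpos_of_nonneg (neg_nonpos.mpr (by positivity)) (by positivity)
  have h2 : Real.exp (-(2 * (1 - ⟪p.2.1, q.2.1⟫ ^ 2)) / σt ^ 2) ≤ 1 := by
    rw [Real.exp_le_one_iff]
    exact div_nonpos_of_nonpos_of_nonneg (by nlinarith) (by positivity)
  have h3 : Real.exp (-(p.2.2 - q.2.2) ^ 2 / σf ^ 2) ≤ 1 := by
    rw [Real.exp_le_one_iff]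
    exact div_nonpos_of_nonpos_of_nonneg (neg_nonpos.mpr (by positivity)) (by positivity)
  exact mul_le_one₀ (mul_le_one₀ h1 (Real.exp_pos _).le h2) (Real.exp_pos _).le h3

/-- The discrete `L²` matching energy (`P₀` finite elements, one signal value per
triangle) attains its infimum. -/
theorem discrete_L2_energy_attains_min
    (M P : ℕ) (hM : 0 < M) (hP : 0 < P)
    (v : Fin M → E3) (n : Fin M → E3) (hn : ∀ k, ‖n k‖ = 1)
    (a : Fin M → ℝ) (ha : ∀ k, 0 < a k)
    (w : Fin P → E3) (m : Fin P → E3) (hm : ∀ j, ‖m j‖ = 1)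
    (b : Fin P → ℝ) (hb : ∀ j, 0 < b j) (g : Fin P → ℝ)
    (σe σt σf γf γW : ℝ) (hσe : 0 < σe) (hσt : 0 < σt) (hσf : 0 < σf)
    (hγf : 0 < γf) (hγW : 0 < γW)
    (E : (Fin M → ℝ) → ℝ)
    (hE : ∀ f : Fin M → ℝ,
      E f = γf / 2 * ∑ k, a k * f k ^ 2
        + γW / 2 *
          ((∑ k, ∑ l, a k * a l * kern σe σt σf (v k, n k, f k) (v l, n l, f l))
            - 2 * ∑ k, ∑ j, a k * b j * kern σe σt σf (v k, n k, f k) (w j, m j, g j)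
            + ∑ j, ∑ j', b j * b j' *
                kern σe σt σf (w j, m j, g j) (w j', m j', g j'))) :
    ∃ fstar : Fin M → ℝ, ∀ f : Fin M → ℝ, E fstar ≤ E f := by
  haveI : Nonempty (Fin M) := ⟨⟨0, hM⟩⟩
  -- continuity of E
  have hEeq : E = fun f => γf / 2 * ∑ k, a k * f k ^ 2
        + γW / 2 *
          ((∑ k, ∑ l, a k * a l * kern σe σt σf (v k, n k, f k) (v l, n l, f l))
            - 2 * ∑ k, ∑ j, a k * b j * kern σe σt σf (v k, n k, f k) (w j, m j, g j)
            + ∑ j, ∑ j', b j * b j' *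
                kern σe σt σf (w j, m j, g j) (w j', m j', g j')) := funext hE
  have hcont : Continuous E := by
    rw [hEeq]; unfold kern; dsimp only; fun_prop
  -- minimum of areas
  set amin : ℝ := Finset.univ.inf' Finset.univ_nonempty a with hamin
  have haminpos : 0 < amin := by
    obtain ⟨k0, -, hk0⟩ := Finset.exists_mem_eq_inf' Finset.univ_nonempty a
    rw [hamin, hk0]; exact ha k0
  have hamin_le : ∀ k, amin ≤ a k := fun k =>
    Finset.inf'_le a (Finset.mem_univ k)
  set c : ℝ := γf / 2 * amin with hc
  have hcpos : 0 < c := by positivity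
  set C : ℝ := γW * ∑ k, ∑ j, a k * b j with hC
  have hCnonneg : 0 ≤ C := by
    rw [hC]
    have : (0:ℝ) ≤ ∑ k, ∑ j, a k * b j :=
      Finset.sum_nonneg fun k _ => Finset.sum_nonneg fun j _ =>
        mul_nonneg (ha k).le (hb j).le
    positivity
  -- coercivity: E f ≥ c * ‖f‖^2 - C
  have hcoer : ∀ f : Fin M → ℝ, c * ‖f‖ ^ 2 - C ≤ E f := by
    intro f
    rw [hE f]
    -- bound the quadratic term below
    obtain ⟨k0, -, hk0⟩ := Finset.exists_max_image Finset.univ (fun k => |f k|)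
      ⟨Classical.arbitrary _, Finset.mem_univ _⟩
    have hnorm : ‖f‖ ≤ |f k0| := by
      apply pi_norm_le_iff_of_nonneg (abs_nonneg _) |>.2
      intro k; exact hk0 k (Finset.mem_univ k)
    have hnormsq : ‖f‖ ^ 2 ≤ f k0 ^ 2 := by
      rw [← sq_abs (f k0)]
      exact pow_le_pow_left₀ (norm_nonneg f) hnorm 2
    have hT1 : c * ‖f‖ ^ 2 ≤ γf / 2 * ∑ k, a k * f k ^ 2 := by
      have h1 : amin * ‖f‖ ^ 2 ≤ a k0 * f k0 ^ 2 :=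
        mul_le_mul (hamin_le k0) hnormsq (by positivity) (ha k0).le
      have h2 : a k0 * f k0 ^ 2 ≤ ∑ k, a k * f k ^ 2 :=
        Finset.single_le_sum (fun k _ => mul_nonneg (ha k).le (sq_nonneg _))
          (Finset.mem_univ k0)
      calc c * ‖f‖ ^ 2 = γf / 2 * (amin * ‖f‖ ^ 2) := by rw [hc]; ring
        _ ≤ γf / 2 * (a k0 * f k0 ^ 2) := by
            apply mul_le_mul_of_nonneg_left h1 (by positivity)
        _ ≤ γf / 2 * ∑ k, a k * f k ^ 2 := by
            apply mul_le_mul_of_nonneg_left h2 (by positivity)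
    -- bound the varifold term below
    have hS1 : (0:ℝ) ≤ ∑ k, ∑ l, a k * a l * kern σe σt σf (v k, n k, f k) (v l, n l, f l) :=
      Finset.sum_nonneg fun k _ => Finset.sum_nonneg fun l _ =>
        mul_nonneg (mul_nonneg (ha k).le (ha l).le) (kern_pos _ _ _ _ _).le
    have hS3 : (0:ℝ) ≤ ∑ j, ∑ j', b j * b j' *
        kern σe σt σf (w j, m j, g j) (w j', m j', g j') :=
      Finset.sum_nonneg fun j _ => Finset.sum_nonneg fun j' _ =>
        mul_nonneg (mul_nonneg (hb j).le (hb j').le) (kern_pos _ _ _ _ _).le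
    have hS2 : ∑ k, ∑ j, a k * b j * kern σe σt σf (v k, n k, f k) (w j, m j, g j)
        ≤ ∑ k, ∑ j, a k * b j := by
      apply Finset.sum_le_sum; intro k _
      apply Finset.sum_le_sum; intro j _
      have hk1 : kern σe σt σf (v k, n k, f k) (w j, m j, g j) ≤ 1 :=
        kern_le_one _ _ _ _ _ (hn k) (hm j)
      nlinarith [mul_pos (ha k) (hb j)]
    have : -C ≤ γW / 2 *
          ((∑ k, ∑ l, a k * a l * kern σe σt σf (v k, n k, f k) (v l, n l, f l))
            - 2 * ∑ k, ∑ j, a k * b j * kern σe σt σf (v k, n k, f k) (w j, m j, g j)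
            + ∑ j, ∑ j', b j * b j' *
                kern σe σt σf (w j, m j, g j) (w j', m j', g j')) := by
      rw [hC]; nlinarith
    linarith
  -- choose radius
  set R : ℝ := Real.sqrt ((E 0 + C + 1) / c) with hR
  have hE0 : -C ≤ E 0 := by
    have := hcoer 0
    simpa using by linarith [hcoer 0, mul_nonneg hcpos.le (sq_nonneg ‖(0 : Fin M → ℝ)‖)]
  have harg : 0 ≤ (E 0 + C + 1) / c := by
    apply div_nonneg _ hcpos.le; linarith
  have hRsq : c * R ^ 2 = E 0 + C + 1 := by
    rw [hR, Real.sq_sqrt harg, mul_div_cancel₀ _ (ne_of_gt hcpos)]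
  have hRnonneg : 0 ≤ R := Real.sqrt_nonneg _
  -- compact minimization on the closed ball
  have hcomp : IsCompact (Metric.closedBall (0 : Fin M → ℝ) R) :=
    isCompact_closedBall _ _
  have hne : (Metric.closedBall (0 : Fin M → ℝ) R).Nonempty :=
    ⟨0, Metric.mem_closedBall_self hRnonneg⟩
  obtain ⟨fstar, hfs_mem, hfs_min⟩ :=
    hcomp.exists_isMinOn hne hcont.continuousOn
  refine ⟨fstar, fun f => ?_⟩
  by_cases hf : f ∈ Metric.closedBall (0 : Fin M → ℝ) R
  · exact hfs_min hf
  · have hfR : R < ‖f‖ := by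
      simpa [Metric.mem_closedBall, dist_zero_right, not_le] using hf
    have h1 : c * R ^ 2 - C < c * ‖f‖ ^ 2 - C := by
      have : R ^ 2 < ‖f‖ ^ 2 := by
        apply pow_lt_pow_left₀ hfR hRnonneg (by norm_num)
      nlinarith
    have h2 : E fstar ≤ E 0 := hfs_min (Metric.mem_closedBall_self hRnonneg)
    have := hcoer f
    linarith [hRsq ▸ h1]
end
end

section
/- Let h > 0, let (T_k)_{k ∈ Fin M} be pairwise disjoint Borel subsets of ℝ³ with H²(T_k) < ∞, let v_k ∈ T_k and n_k ∈ ℝ³ be given with ‖x − v_k‖ ≤ h for every x ∈ T_k, and let f : ℝ³ → ℝ be Borel measurable and λ-Lipschitz on each T_k ∪ {v_k} (i.e. |f(x) − f(y)| ≤ λ‖x−y‖ for x, y ∈ T_k ∪ {v_k}). Let φ : ℝ³ × ℝ³ × ℝ → ℝ satisfy |φ(x,u,s) − φ(y,v,t)| ≤ L(‖x−y‖ + ‖u−v‖ + |s−t|) for some L ≥ 0. Then | Σ_k ∫_{T_k} φ(x, n_k, f(x)) dH²(x) − Σ_k H²(T_k) φ(v_k, n_k, f(v_k)) | ≤ L ·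 h · (1 + λ) · Σ_k H²(T_k). -/
open MeasureTheory

noncomputable section

/-- For a `P₁` signal `f` which is `λ`-Lipschitz on each piece `T k ∪ {v k}` with
piecewise constant normals `n k`, the dual pairing difference between the fvarifold of
a triangulation decomposed into pieces `T k` of diameter `≤ h` and the discrete
fvarifold `Σ_k H²(T k) δ_{(v k, n k, f (v k))}` is bounded by
`L·h·(1 + λ)·Σ_k H²(T k)` for any `L`-Lipschitz test function `φ`. -/
theorem fvarifold_dirac_approx_P1
    (h : ℝ) (hh : 0 < h) (M : ℕ)
    (T : Fin M → Set E3) (hT : ∀ k, MeasurableSet (T k))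
    (hTfin : ∀ k, μH[2] (T k) < ⊤)
    (hdisj : Pairwise fun k l => Disjoint (T k) (T l))
    (v n : Fin M → E3) (hv : ∀ k, v k ∈ T k)
    (hclose : ∀ k, ∀ x ∈ T k, ‖x - v k‖ ≤ h)
    (f : E3 → ℝ) (hfmeas : Measurable f) (lam : ℝ) (hlam : 0 ≤ lam)
    (hflip : ∀ k, ∀ x ∈ T k ∪ {v k}, ∀ y ∈ T k ∪ {v k}, |f x - f y| ≤ lam * ‖x - y‖)
    (φ : E3 × E3 × ℝ → ℝ) (L : ℝ) (hL : 0 ≤ L)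
    (hlip : ∀ p q : E3 × E3 × ℝ,
      |φ p - φ q| ≤ L * (‖p.1 - q.1‖ + ‖p.2.1 - q.2.1‖ + |p.2.2 - q.2.2|)) :
    |(∑ k, ∫ x in T k, φ (x, n k, f x) ∂μH[2])
        - ∑ k, (μH[2] (T k)).toReal * φ (v k, n k, f (v k))|
      ≤ L * h * (1 + lam) * ∑ k, (μH[2] (T k)).toReal := by
  -- φ is Lipschitz, hence continuous
  have hφc : Continuous φ := by
    apply LipschitzWith.continuous (K := ⟨3 * L, by positivity⟩)
    apply LipschitzWith.of_dist_le_mul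
    intro p q
    have hd2 : dist p.2 q.2 ≤ dist p q := by rw [Prod.dist_eq]; exact le_max_right _ _
    have h1 : dist p.1 q.1 ≤ dist p q := by rw [Prod.dist_eq]; exact le_max_left _ _
    have h2 : dist p.2.1 q.2.1 ≤ dist p q :=
      le_trans (by rw [Prod.dist_eq (x := p.2)]; exact le_max_left _ _) hd2
    have h3 : dist p.2.2 q.2.2 ≤ dist p q :=
      le_trans (by rw [Prod.dist_eq (x := p.2)]; exact le_max_right _ _) hd2
    have := hlip p q
    rw [dist_eq_norm] at h1 h2
    rw [Real.dist_eq] at h3 ⊢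
    calc |φ p - φ q| ≤ L * (‖p.1 - q.1‖ + ‖p.2.1 - q.2.1‖ + |p.2.2 - q.2.2|) := this
      _ ≤ L * (dist p q + dist p q + dist p q) := by
          apply mul_le_mul_of_nonneg_left _ hL
          linarith
      _ = (⟨3 * L, by positivity⟩ : NNReal) * dist p q := by
          simp; ring
  have hgmeas : ∀ k, Measurable (fun x => φ (x, n k, f x)) := fun k =>
    hφc.measurable.comp (measurable_id.prodMk (measurable_const.prodMk hfmeas))
  have key : ∀ k, |(∫ x in T k, φ (x, n k, f x) ∂μH[2])
      - (μH[2] (T k)).toReal * φ (v k, n k, f (v k))|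
      ≤ L * h * (1 + lam) * (μH[2] (T k)).toReal := by
    intro k
    set c := φ (v k, n k, f (v k)) with hc
    have hbound : ∀ x ∈ T k, ‖φ (x, n k, f x) - c‖ ≤ L * h * (1 + lam) := by
      intro x hx
      have h1 := hlip (x, n k, f x) (v k, n k, f (v k))
      simp only at h1
      have h2 : |f x - f (v k)| ≤ lam * ‖x - v k‖ :=
        hflip k x (Or.inl hx) (v k) (Or.inr rfl)
      have h3 : ‖x - v k‖ ≤ h := hclose k x hx
      rw [Real.norm_eq_abs]
      calc |φ (x, n k, f x) - c|
          ≤ L * (‖x - v k‖ + ‖n k - n k‖ + |f x - f (v k)|) := h1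
        _ ≤ L * (h + 0 + lam * h) := by
            apply mul_le_mul_of_nonneg_left _ hL
            have : ‖n k - n k‖ = 0 := by simp
            have h4 : lam * ‖x - v k‖ ≤ lam * h := mul_le_mul_of_nonneg_left h3 hlam
            linarith
        _ = L * h * (1 + lam) := by ring
    have hint : IntegrableOn (fun x => φ (x, n k, f x)) (T k) μH[2] := by
      apply Measure.integrableOn_of_bounded (hTfin k).ne
        (hgmeas k).aestronglyMeasurable (M := L * h * (1 + lam) + |c|)
      rw [ae_restrict_iff' (hT k)]
      refine Filter.Eventually.of_forall fun x hx => ?_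
      have := hbound x hx
      rw [Real.norm_eq_abs] at this ⊢
      calc |φ (x, n k, f x)| = |(φ (x, n k, f x) - c) + c| := by ring_nf
        _ ≤ |φ (x, n k, f x) - c| + |c| := abs_add_le _ _
        _ ≤ L * h * (1 + lam) + |c| := by linarith
    have hrw : (μH[2] (T k)).toReal * c = ∫ _x in T k, c ∂μH[2] := by
      rw [setIntegral_const, smul_eq_mul]; rfl
    rw [hrw, ← integral_sub hint (integrableOn_const (hTfin k).ne)]
    have := norm_setIntegral_le_of_norm_le_const (μ := μH[2]) (hTfin k)
      (f := fun x => φ (x, n k, f x) - c) hbound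
    rwa [Real.norm_eq_abs] at this
  calc |(∑ k, ∫ x in T k, φ (x, n k, f x) ∂μH[2])
        - ∑ k, (μH[2] (T k)).toReal * φ (v k, n k, f (v k))|
      = |∑ k, ((∫ x in T k, φ (x, n k, f x) ∂μH[2])
          - (μH[2] (T k)).toReal * φ (v k, n k, f (v k)))| := by
        rw [Finset.sum_sub_distrib]
    _ ≤ ∑ k, |(∫ x in T k, φ (x, n k, f x) ∂μH[2])
          - (μH[2] (T k)).toReal * φ (v k, n k, f (v k))| :=
        Finset.abs_sum_le_sum_abs _ _
    _ ≤ ∑ k, L * h * (1 + lam) * (μH[2] (T k)).toReal :=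
        Finset.sum_le_sum fun k _ => key k
    _ = L * h * (1 + lam) * ∑ k, (μH[2] (T k)).toReal := by rw [Finset.mul_sum]
end
end

section
/- Let X, Y ⊆ ℝ³ be bounded Borel sets with H²(X) < ∞ and H²(Y) < ∞, let n_X, n_Y : ℝ³ → ℝ³ be Borel measurable unit normal fields on X and Y respectively, let g : ℝ³ → ℝ be Borel measurable with ∫_Y g² dH² < ∞, and let γ_f, γ_W > 0. Define E(f) = (γ_f/2)∫_X f² dH² + (γ_W/2)[ ∫_X∫_X k((x,n_X(x),f(x)),(y,n_X(y),f(y))) dH²dH² − 2∫_X∫_Y k((x,n_X(x),f(x)),(y,n_Y(y),g(y))) dH²dH² + ∫_Y∫_Y k((x,n_Y(x),g(x)),(y,n_Y(y),g(y))) dH²dH² ] for Borel measurable f with ∫_X f² dH² < ∞. Then there exists a constant C > 0 depending only on the kernel parameters σ_e, σ_t, σ_f (in particular independent of X and Y) such that every minimizer f* of E over the square-integrable signals is essentially bounded and satisfies the essential supremum bound ‖f*‖_{L∞(X)} ≤ C (γ_W/γ_f) (H²(X) + H²(Y)). -/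
open MeasureTheory
open scoped RealInnerProductSpace

noncomputable section

/-- The `L²` matching energy
`E(f) = (γf/2)‖f‖²_{L²(X)} + (γW/2)‖μ_{(X,f)} − μ_{(Y,g)}‖²_{W'}`,
the squared varifold distance being computed by integrating the kernel. -/
def energyL2 (σe σt σf γf γW : ℝ) (X Y : Set E3) (nX nY : E3 → E3) (g f : E3 → ℝ) :
    ℝ :=
  γf / 2 * ∫ x in X, (f x) ^ 2 ∂μH[2]
    + γW / 2 *
      ((∫ x in X, ∫ y in X, kern σe σt σf (x, nX x, f x) (y, nX y, f y) ∂μH[2] ∂μH[2])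
        - 2 * ∫ x in X, ∫ y in Y,
            kern σe σt σf (x, nX x, f x) (y, nY y, g y) ∂μH[2] ∂μH[2]
        + ∫ x in Y, ∫ y in Y,
            kern σe σt σf (x, nY x, g x) (y, nY y, g y) ∂μH[2] ∂μH[2])

lemma expsq_lip (c : ℝ) (hc : 0 < c) (u v : ℝ) :
    |Real.exp (-u ^ 2 / c ^ 2) - Real.exp (-v ^ 2 / c ^ 2)| ≤ 2 / c * |u - v| := by
  have hder : ∀ w : ℝ, HasDerivAt (fun u : ℝ => Real.exp (-u ^ 2 / c ^ 2))
      (Real.exp (-w ^ 2 / c ^ 2) * (-(2 * w) / c ^ 2)) w := by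
    intro w
    have h1 : HasDerivAt (fun u : ℝ => -u ^ 2 / c ^ 2) (-(2 * w) / c ^ 2) w := by
      have h0 : HasDerivAt (fun u : ℝ => u ^ 2) (2 * w) w := by
        simpa using hasDerivAt_pow 2 w
      simpa using (h0.neg.div_const (c ^ 2))
    exact h1.exp
  have hbound : ∀ w : ℝ, ‖Real.exp (-w ^ 2 / c ^ 2) * (-(2 * w) / c ^ 2)‖ ≤ 2 / c := by
    intro w
    have hE : Real.exp (-w ^ 2 / c ^ 2) = (Real.exp (w ^ 2 / c ^ 2))⁻¹ := by
      rw [← Real.exp_neg]; ring_nf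
    have hEe : 1 + w ^ 2 / c ^ 2 ≤ Real.exp (w ^ 2 / c ^ 2) := by
      have := Real.add_one_le_exp (w ^ 2 / c ^ 2); linarith
    have hEpos : (0:ℝ) < Real.exp (w ^ 2 / c ^ 2) := Real.exp_pos _
    have key : |w| * (Real.exp (w ^ 2 / c ^ 2))⁻¹ ≤ c := by
      rw [← div_eq_mul_inv, div_le_iff₀ hEpos]
      have h2 : c * (1 + w ^ 2 / c ^ 2) = c + w ^ 2 / c := by field_simp
      have h3 : |w| ≤ c + w ^ 2 / c := by
        have h4 : 2 * (|w| * c) ≤ w ^ 2 + c ^ 2 := by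
          nlinarith [sq_nonneg (|w| - c), sq_abs w]
        rw [← sub_nonneg]
        have : c + w ^ 2 / c - |w| = (w ^ 2 + c ^ 2 - |w| * c) / c := by field_simp; ring
        rw [this]
        apply div_nonneg _ hc.le
        nlinarith [mul_nonneg (abs_nonneg w) hc.le]
      calc |w| ≤ c + w ^ 2 / c := h3
        _ = c * (1 + w ^ 2 / c ^ 2) := h2.symm
        _ ≤ c * Real.exp (w ^ 2 / c ^ 2) := by nlinarith
    rw [Real.norm_eq_abs, abs_mul, abs_div, hE]
    have : |(Real.exp (w ^ 2 / c ^ 2))⁻¹| = (Real.exp (w ^ 2 / c ^ 2))⁻¹ :=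
      abs_of_pos (by positivity)
    rw [this]
    have hc2 : |c ^ 2| = c ^ 2 := abs_of_pos (by positivity)
    rw [abs_neg, abs_mul, hc2]
    have habs2 : |(2:ℝ)| = 2 := by norm_num
    rw [habs2]
    have heq : (Real.exp (w ^ 2 / c ^ 2))⁻¹ * (2 * |w| / c ^ 2)
        = 2 * (|w| * (Real.exp (w ^ 2 / c ^ 2))⁻¹) / c ^ 2 := by ring
    rw [heq]
    have h2c : 2 * (|w| * (Real.exp (w ^ 2 / c ^ 2))⁻¹) ≤ 2 * c := by nlinarith
    calc 2 * (|w| * (Real.exp (w ^ 2 / c ^ 2))⁻¹) / c ^ 2 ≤ 2 * c / c ^ 2 :=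
          div_le_div_of_nonneg_right h2c (by positivity)
      _ = 2 / c := by field_simp
  have := Convex.norm_image_sub_le_of_norm_deriv_le
    (f := fun u : ℝ => Real.exp (-u ^ 2 / c ^ 2)) (s := Set.univ)
    (fun x _ => (hder x).differentiableAt)
    (fun x _ => by rw [(hder x).deriv]; exact hbound x)
    convex_univ (Set.mem_univ u) (Set.mem_univ v)
  simpa [Real.norm_eq_abs, abs_sub_comm] using this
lemma kern_nonneg (σe σt σf : ℝ) (p q : E3 × E3 × ℝ) : 0 ≤ kern σe σt σf p q := by
  unfold kern; positivity

lemma AB_mem (σe σt : ℝ) (hσe : 0 < σe) (hσt : 0 < σt) (x y u v : E3)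
    (hu : ‖u‖ = 1) (hv : ‖v‖ = 1) :
    Real.exp (-‖x - y‖ ^ 2 / σe ^ 2) * Real.exp (-(2 * (1 - ⟪u, v⟫ ^ 2)) / σt ^ 2) ≤ 1 := by
  have h1 : Real.exp (-‖x - y‖ ^ 2 / σe ^ 2) ≤ 1 := by
    rw [Real.exp_le_one_iff]
    apply div_nonpos_of_nonpos_of_nonneg (neg_nonpos.mpr (by positivity)) (by positivity)
  have hin : |⟪u, v⟫| ≤ 1 := by
    have := abs_real_inner_le_norm u v
    rwa [hu, hv, one_mul] at this
  have h2 : Real.exp (-(2 * (1 - ⟪u, v⟫ ^ 2)) / σt ^ 2) ≤ 1 := by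
    rw [Real.exp_le_one_iff]
    apply div_nonpos_of_nonpos_of_nonneg _ (by positivity)
    have : ⟪u, v⟫ ^ 2 ≤ 1 := by nlinarith [sq_abs ⟪u, v⟫, abs_nonneg ⟪u, v⟫]
    nlinarith
  have e1 := Real.exp_pos (-‖x - y‖ ^ 2 / σe ^ 2)
  have e2 := Real.exp_pos (-(2 * (1 - ⟪u, v⟫ ^ 2)) / σt ^ 2)
  nlinarith

lemma kern_le_one_s13 (σe σt σf : ℝ) (hσe : 0 < σe) (hσt : 0 < σt) (x y u v : E3)
    (hu : ‖u‖ = 1) (hv : ‖v‖ = 1) (s t : ℝ) :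
    kern σe σt σf (x, u, s) (y, v, t) ≤ 1 := by
  unfold kern
  simp only
  have hAB := AB_mem σe σt hσe hσt x y u v hu hv
  have e3 : Real.exp (-(s - t) ^ 2 / σf ^ 2) ≤ 1 := by
    rw [Real.exp_le_one_iff]
    apply div_nonpos_of_nonpos_of_nonneg (neg_nonpos.mpr (by positivity)) (by positivity)
  have := Real.exp_pos (-(s - t) ^ 2 / σf ^ 2)
  have e1 := Real.exp_pos (-‖x - y‖ ^ 2 / σe ^ 2)
  have e2 := Real.exp_pos (-(2 * (1 - ⟪u, v⟫ ^ 2)) / σt ^ 2)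
  nlinarith

lemma kern_diff (σe σt σf : ℝ) (hσe : 0 < σe) (hσt : 0 < σt) (hσf : 0 < σf)
    (x y u v : E3) (hu : ‖u‖ = 1) (hv : ‖v‖ = 1) (s t s' t' : ℝ) :
    |kern σe σt σf (x, u, s) (y, v, t) - kern σe σt σf (x, u, s') (y, v, t')| ≤
      2 / σf * (|s - s'| + |t - t'|) := by
  unfold kern
  simp only
  set A := Real.exp (-‖x - y‖ ^ 2 / σe ^ 2) * Real.exp (-(2 * (1 - ⟪u, v⟫ ^ 2)) / σt ^ 2)
    with hA
  have hAB := AB_mem σe σt hσe hσt x y u v hu hv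
  have hA0 : 0 ≤ A := by rw [hA]; positivity
  have heq : A * Real.exp (-(s - t) ^ 2 / σf ^ 2) - A * Real.exp (-(s' - t') ^ 2 / σf ^ 2)
      = A * (Real.exp (-(s - t) ^ 2 / σf ^ 2) - Real.exp (-(s' - t') ^ 2 / σf ^ 2)) := by ring
  calc |A * Real.exp (-(s - t) ^ 2 / σf ^ 2) - A * Real.exp (-(s' - t') ^ 2 / σf ^ 2)|
      = A * |Real.exp (-(s - t) ^ 2 / σf ^ 2) - Real.exp (-(s' - t') ^ 2 / σf ^ 2)| := by
        rw [heq, abs_mul, abs_of_nonneg hA0]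
    _ ≤ 1 * |Real.exp (-(s - t) ^ 2 / σf ^ 2) - Real.exp (-(s' - t') ^ 2 / σf ^ 2)| := by
        apply mul_le_mul_of_nonneg_right hAB (abs_nonneg _)
    _ = |Real.exp (-(s - t) ^ 2 / σf ^ 2) - Real.exp (-(s' - t') ^ 2 / σf ^ 2)| := one_mul _
    _ ≤ 2 / σf * |(s - t) - (s' - t')| := expsq_lip σf hσf _ _
    _ ≤ 2 / σf * (|s - s'| + |t - t'|) := by
        apply mul_le_mul_of_nonneg_left _ (by positivity)
        calc |(s - t) - (s' - t')| = |(s - s') + -(t - t')| := by ring_nf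
          _ ≤ |s - s'| + |-(t - t')| := abs_add_le _ _
          _ = |s - s'| + |t - t'| := by rw [abs_neg]

lemma kern_cont (σe σt σf : ℝ) :
    Continuous (fun z : (E3 × E3 × ℝ) × (E3 × E3 × ℝ) => kern σe σt σf z.1 z.2) := by
  unfold kern
  apply Continuous.mul
  apply Continuous.mul
  · exact Real.continuous_exp.comp ((((continuous_fst.fst.sub continuous_snd.fst).norm.pow 2).neg).div_const _)
  · exact Real.continuous_exp.comp ((((continuous_const.sub ((continuous_fst.snd.fst.inner continuous_snd.snd.fst).pow 2)).const_smul (2:ℝ)).neg).div_const _)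
  · exact Real.continuous_exp.comp ((((continuous_fst.snd.snd.sub continuous_snd.snd.snd).pow 2).neg).div_const _)

set_option maxHeartbeats 1000000 in
/-- Uniform `L∞` bound on minimizers of the `L²` matching energy: there is a constant
`C > 0` depending only on the kernel parameters (in particular independent of `X` and
`Y`) such that every minimizer `f*` of `E` over the square-integrable signals is
essentially bounded with `‖f*‖_{L∞(X)} ≤ C (γW/γf)(H²(X) + H²(Y))`. -/
theorem L2_energy_minimizer_essSup_bound
    (σe σt σf : ℝ) (hσe : 0 < σe) (hσt : 0 < σt) (hσf : 0 < σf) :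
    ∃ C : ℝ, 0 < C ∧
      ∀ (X Y : Set E3), Bornology.IsBounded X → Bornology.IsBounded Y →
        MeasurableSet X → MeasurableSet Y → μH[2] X < ⊤ → μH[2] Y < ⊤ →
        ∀ (nX nY : E3 → E3), Measurable nX → Measurable nY →
          (∀ x ∈ X, ‖nX x‖ = 1) → (∀ y ∈ Y, ‖nY y‖ = 1) →
        ∀ (g : E3 → ℝ), Measurable g → MemLp g 2 (μH[2].restrict Y) →
        ∀ (γf γW : ℝ), 0 < γf → 0 < γW →
        ∀ fstar : E3 → ℝ, Measurable fstar → MemLp fstar 2 (μH[2].restrict X) →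
          (∀ f : E3 → ℝ, Measurable f → MemLp f 2 (μH[2].restrict X) →
            energyL2 σe σt σf γf γW X Y nX nY g fstar ≤
              energyL2 σe σt σf γf γW X Y nX nY g f) →
          ∀ᵐ x ∂(μH[2].restrict X),
            |fstar x| ≤ C * (γW / γf) * ((μH[2] X).toReal + (μH[2] Y).toReal) := by
  refine ⟨3 / σf, by positivity, ?_⟩
  intro X Y _hXb _hYb hXm hYm hXfin hYfin nX nY hnXm hnYm hnX hnY g hgm hgmem
    γf γW hγf hγW fstar hfm hfmem hmin
  set νX := (μH[2] : Measure E3).restrict X with hνX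
  set νY := (μH[2] : Measure E3).restrict Y with hνY
  haveI : IsFiniteMeasure νX := ⟨by rw [hνX, Measure.restrict_apply_univ]; exact hXfin⟩
  haveI : IsFiniteMeasure νY := ⟨by rw [hνY, Measure.restrict_apply_univ]; exact hYfin⟩
  set a := ((μH[2] : Measure E3) X).toReal with haa
  set b := ((μH[2] : Measure E3) Y).toReal with hbb
  have ha0 : 0 ≤ a := ENNReal.toReal_nonneg
  have hb0 : 0 ≤ b := ENNReal.toReal_nonneg
  have hνXuniv : (νX Set.univ).toReal = a := by rw [hνX, Measure.restrict_apply_univ]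
  have hνYuniv : (νY Set.univ).toReal = b := by rw [hνY, Measure.restrict_apply_univ]
  by_cases hab : a + b = 0
  · have haz : a = 0 := by linarith
    have hXz : (μH[2] : Measure E3) X = 0 := by
      rcases (ENNReal.toReal_eq_zero_iff _).mp haz with h | h
      · exact h
      · exact absurd h hXfin.ne
    have hz : νX = 0 := by rw [hνX, Measure.restrict_eq_zero]; exact hXz
    rw [hz]
    simp
  have hab' : 0 < a + b := lt_of_le_of_ne (by linarith) (Ne.symm hab)
  set M := 3 / σf * (γW / γf) * (a + b) with hM
  have hM0 : 0 < M := by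
    apply mul_pos (mul_pos (by positivity) (by positivity)) hab'
  set f : E3 → ℝ := fun x => max (-M) (min M (fstar x)) with hfdef
  have hfm' : Measurable f := measurable_const.max (measurable_const.min hfm)
  set h : E3 → ℝ := fun x => max (|fstar x| - M) 0 with hhdef
  have hh_meas : Measurable h := (hfm.abs.sub measurable_const).max measurable_const
  have hh0 : ∀ x, 0 ≤ h x := fun x => le_max_right _ _
  -- pointwise case analysis for the truncation
  have hcases : ∀ x, (f x = fstar x ∧ h x = 0) ∨
      (h x = |fstar x| - M ∧ M ≤ |fstar x| ∧ |f x| = M ∧ |fstar x - f x| = |fstar x| - M) := by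
    intro x
    rcases le_total (fstar x) (-M) with h1 | h1
    · right
      have hmin' : min M (fstar x) = fstar x := min_eq_right (by linarith)
      have hfx : f x = -M := by rw [hfdef]; simp only [hmin']; exact max_eq_left h1
      have habs : |fstar x| = -fstar x := abs_of_nonpos (by linarith)
      refine ⟨max_eq_left (by linarith), by linarith, ?_, ?_⟩
      · rw [hfx, abs_neg, abs_of_pos hM0]
      · rw [hfx, habs]
        rw [abs_of_nonpos (by linarith)]
        ring
    · rcases le_total M (fstar x) with h2 | h2
      · right
        have hmin' : min M (fstar x) = M := min_eq_left h2
        have hfx : f x = M := by rw [hfdef]; simp only [hmin']; exact max_eq_right (by linarith)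
        have habs : |fstar x| = fstar x := abs_of_nonneg (by linarith)
        refine ⟨max_eq_left (by linarith), by linarith, ?_, ?_⟩
        · rw [hfx, abs_of_pos hM0]
        · rw [hfx, habs, abs_of_nonneg (by linarith)]
      · left
        have hmin' : min M (fstar x) = fstar x := min_eq_right h2
        have habsle : |fstar x| ≤ M := abs_le.mpr ⟨h1, h2⟩
        constructor
        · rw [hfdef]; simp only [hmin']; exact max_eq_right h1
        · rw [hhdef]; simp only; exact max_eq_right (by linarith)
  have hdiff : ∀ x, |fstar x - f x| = h x := by
    intro x
    rcases hcases x with ⟨h1, h2⟩ | ⟨h1, _, _, h4⟩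
    · rw [h1, h2, sub_self, abs_zero]
    · rw [h4, h1]
  have hsq : ∀ x, 2 * M * h x ≤ fstar x ^ 2 - f x ^ 2 := by
    intro x
    rcases hcases x with ⟨h1, h2⟩ | ⟨h1, h2, h3, _⟩
    · rw [h1, h2]; ring_nf; exact le_refl _
    · have hf2 : f x ^ 2 = M ^ 2 := by rw [← sq_abs, h3]
      have hfs2 : fstar x ^ 2 = |fstar x| ^ 2 := (sq_abs _).symm
      rw [h1, hf2, hfs2]
      nlinarith
  have hfabs_le : ∀ x, |f x| ≤ |fstar x| := by
    intro x
    rcases hcases x with ⟨h1, _⟩ | ⟨_, h2, h3, _⟩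
    · rw [h1]
    · rw [h3]; exact h2
  -- membership and integrability
  have hfmem2 : MemLp f 2 νX :=
    hfmem.of_le hfm'.aestronglyMeasurable
      (Filter.Eventually.of_forall fun x => by
        rw [Real.norm_eq_abs, Real.norm_eq_abs]; exact hfabs_le x)
  have hfstar_int : Integrable fstar νX := hfmem.integrable (by norm_num)
  have hh_int : Integrable h νX := by
    apply Integrable.mono hfstar_int hh_meas.aestronglyMeasurable
    apply Filter.Eventually.of_forall
    intro x
    rw [Real.norm_eq_abs, Real.norm_eq_abs, abs_of_nonneg (hh0 x)]
    show max (|fstar x| - M) 0 ≤ |fstar x|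
    exact max_le (by linarith [hM0.le]) (abs_nonneg _)
  have hsq1 : Integrable (fun x => fstar x ^ 2) νX := hfmem.integrable_sq
  have hsq2 : Integrable (fun x => f x ^ 2) νX := hfmem2.integrable_sq
  set S := ∫ x, h x ∂νX with hS
  have hS0 : 0 ≤ S := integral_nonneg hh0
  -- L² part
  have key1 : 2 * M * S ≤ (∫ x, fstar x ^ 2 ∂νX) - ∫ x, f x ^ 2 ∂νX := by
    have e1 : ∫ x, 2 * M * h x ∂νX = 2 * M * S := integral_const_mul (2 * M) h
    have e2 : ∫ x, (fstar x ^ 2 - f x ^ 2) ∂νX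
        = (∫ x, fstar x ^ 2 ∂νX) - ∫ x, f x ^ 2 ∂νX := integral_sub hsq1 hsq2
    have e3 : ∫ x, 2 * M * h x ∂νX ≤ ∫ x, (fstar x ^ 2 - f x ^ 2) ∂νX :=
      integral_mono (hh_int.const_mul (2 * M)) (hsq1.sub hsq2) hsq
    rw [e1, e2] at e3
    exact e3
  have haeX : ∀ᵐ x ∂νX, x ∈ X := ae_restrict_mem hXm
  have haeY : ∀ᵐ y ∂νY, y ∈ Y := ae_restrict_mem hYm
  have hmXX : ∀ (φ : E3 → ℝ), Measurable φ →
      Measurable (fun p : E3 × E3 =>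
        kern σe σt σf (p.1, nX p.1, φ p.1) (p.2, nX p.2, φ p.2)) := by
    intro φ hφ
    unfold kern
    simp only
    have m1 : Measurable fun p : E3 × E3 => Real.exp (-‖p.1 - p.2‖ ^ 2 / σe ^ 2) :=
      Real.measurable_exp.comp
        ((((measurable_fst.sub measurable_snd).norm.pow_const 2).neg).div_const _)
    have m2 : Measurable fun p : E3 × E3 =>
        Real.exp (-(2 * (1 - ⟪nX p.1, nX p.2⟫ ^ 2)) / σt ^ 2) := by
      have hi : Measurable fun p : E3 × E3 => ⟪nX p.1, nX p.2⟫ :=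
        (hnXm.comp measurable_fst).inner (hnXm.comp measurable_snd)
      exact Real.measurable_exp.comp
        ((((measurable_const.sub (hi.pow_const 2)).const_mul 2).neg).div_const _)
    have m3 : Measurable fun p : E3 × E3 => Real.exp (-(φ p.1 - φ p.2) ^ 2 / σf ^ 2) :=
      Real.measurable_exp.comp (((((hφ.comp measurable_fst).sub
        (hφ.comp measurable_snd)).pow_const 2).neg).div_const _)
    exact (m1.mul m2).mul m3
  have hmXY : ∀ (φ : E3 → ℝ), Measurable φ →
      Measurable (fun p : E3 × E3 =>
        kern σe σt σf (p.1, nX p.1, φ p.1) (p.2, nY p.2, g p.2)) := by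
    intro φ hφ
    unfold kern
    simp only
    have m1 : Measurable fun p : E3 × E3 => Real.exp (-‖p.1 - p.2‖ ^ 2 / σe ^ 2) :=
      Real.measurable_exp.comp
        ((((measurable_fst.sub measurable_snd).norm.pow_const 2).neg).div_const _)
    have m2 : Measurable fun p : E3 × E3 =>
        Real.exp (-(2 * (1 - ⟪nX p.1, nY p.2⟫ ^ 2)) / σt ^ 2) := by
      have hi : Measurable fun p : E3 × E3 => ⟪nX p.1, nY p.2⟫ :=
        (hnXm.comp measurable_fst).inner (hnYm.comp measurable_snd)
      exact Real.measurable_exp.comp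
        ((((measurable_const.sub (hi.pow_const 2)).const_mul 2).neg).div_const _)
    have m3 : Measurable fun p : E3 × E3 => Real.exp (-(φ p.1 - g p.2) ^ 2 / σf ^ 2) :=
      Real.measurable_exp.comp (((((hφ.comp measurable_fst).sub
        (hgm.comp measurable_snd)).pow_const 2).neg).div_const _)
    exact (m1.mul m2).mul m3
  have hinnXX : ∀ (φ : E3 → ℝ), Measurable φ → ∀ x, x ∈ X →
      Integrable (fun y => kern σe σt σf (x, nX x, φ x) (y, nX y, φ y)) νX := by
    intro φ hφ x hx
    refine Integrable.mono' (integrable_const 1)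
      (((hmXX φ hφ).comp (measurable_const.prodMk measurable_id)).aestronglyMeasurable) ?_
    filter_upwards [haeX] with y hy
    rw [Real.norm_eq_abs, abs_of_nonneg (kern_nonneg _ _ _ _ _)]
    exact kern_le_one_s13 σe σt σf hσe hσt x y (nX x) (nX y) (hnX x hx) (hnX y hy) (φ x) (φ y)
  have hinnXY : ∀ (φ : E3 → ℝ), Measurable φ → ∀ x, x ∈ X →
      Integrable (fun y => kern σe σt σf (x, nX x, φ x) (y, nY y, g y)) νY := by
    intro φ hφ x hx
    refine Integrable.mono' (integrable_const 1)
      (((hmXY φ hφ).comp (measurable_const.prodMk measurable_id)).aestronglyMeasurable) ?_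
    filter_upwards [haeY] with y hy
    rw [Real.norm_eq_abs, abs_of_nonneg (kern_nonneg _ _ _ _ _)]
    exact kern_le_one_s13 σe σt σf hσe hσt x y (nX x) (nY y) (hnX x hx) (hnY y hy) (φ x) (g y)
  have houtXX : ∀ (φ : E3 → ℝ), Measurable φ →
      Integrable (fun x => ∫ y, kern σe σt σf (x, nX x, φ x) (y, nX y, φ y) ∂νX) νX := by
    intro φ hφ
    refine Integrable.mono' (integrable_const a)
      (AEStronglyMeasurable.integral_prod_right'
        (f := fun p : E3 × E3 => kern σe σt σf (p.1, nX p.1, φ p.1) (p.2, nX p.2, φ p.2))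
        ((hmXX φ hφ).aestronglyMeasurable)) ?_
    filter_upwards [haeX] with x hx
    have hb : ∀ᵐ y ∂νX, ‖kern σe σt σf (x, nX x, φ x) (y, nX y, φ y)‖ ≤ 1 := by
      filter_upwards [haeX] with y hy
      rw [Real.norm_eq_abs, abs_of_nonneg (kern_nonneg _ _ _ _ _)]
      exact kern_le_one_s13 σe σt σf hσe hσt x y (nX x) (nX y) (hnX x hx) (hnX y hy) (φ x) (φ y)
    calc ‖∫ y, kern σe σt σf (x, nX x, φ x) (y, nX y, φ y) ∂νX‖
        ≤ 1 * (νX Set.univ).toReal := norm_integral_le_of_norm_le_const hb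
      _ = a := by rw [one_mul, hνXuniv]
  have houtXY : ∀ (φ : E3 → ℝ), Measurable φ →
      Integrable (fun x => ∫ y, kern σe σt σf (x, nX x, φ x) (y, nY y, g y) ∂νY) νX := by
    intro φ hφ
    refine Integrable.mono' (integrable_const b)
      (AEStronglyMeasurable.integral_prod_right'
        (f := fun p : E3 × E3 => kern σe σt σf (p.1, nX p.1, φ p.1) (p.2, nY p.2, g p.2))
        ((hmXY φ hφ).aestronglyMeasurable)) ?_
    filter_upwards [haeX] with x hx
    have hb : ∀ᵐ y ∂νY, ‖kern σe σt σf (x, nX x, φ x) (y, nY y, g y)‖ ≤ 1 := by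
      filter_upwards [haeY] with y hy
      rw [Real.norm_eq_abs, abs_of_nonneg (kern_nonneg _ _ _ _ _)]
      exact kern_le_one_s13 σe σt σf hσe hσt x y (nX x) (nY y) (hnX x hx) (hnY y hy) (φ x) (g y)
    calc ‖∫ y, kern σe σt σf (x, nX x, φ x) (y, nY y, g y) ∂νY‖
        ≤ 1 * (νY Set.univ).toReal := norm_integral_le_of_norm_le_const hb
      _ = b := by rw [one_mul, hνYuniv]
  -- comparison of the XX double integrals
  have hT1 : (∫ x, ∫ y, kern σe σt σf (x, nX x, f x) (y, nX y, f y) ∂νX ∂νX)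
      - (∫ x, ∫ y, kern σe σt σf (x, nX x, fstar x) (y, nX y, fstar y) ∂νX ∂νX)
      ≤ 2 / σf * (a * S + a * S) := by
    have hint1 := houtXX f hfm'
    have hint2 := houtXX fstar hfm
    have hbnd : ∀ᵐ x ∂νX,
        (∫ y, kern σe σt σf (x, nX x, f x) (y, nX y, f y) ∂νX)
          - (∫ y, kern σe σt σf (x, nX x, fstar x) (y, nX y, fstar y) ∂νX)
        ≤ 2 / σf * (a * h x + S) := by
      filter_upwards [haeX] with x hx
      have h1 := hinnXX f hfm' x hx
      have h2 := hinnXX fstar hfm x hx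
      rw [← integral_sub h1 h2]
      have hmono : (∫ y, (kern σe σt σf (x, nX x, f x) (y, nX y, f y)
            - kern σe σt σf (x, nX x, fstar x) (y, nX y, fstar y)) ∂νX)
          ≤ ∫ y, 2 / σf * (h x + h y) ∂νX := by
        apply integral_mono_ae (h1.sub h2)
          (((integrable_const (h x)).add hh_int).const_mul (2 / σf))
        filter_upwards [haeX] with y hy
        have hk := kern_diff σe σt σf hσe hσt hσf x y (nX x) (nX y)
          (hnX x hx) (hnX y hy) (f x) (f y) (fstar x) (fstar y)
        have e1 : |f x - fstar x| = h x := by rw [abs_sub_comm]; exact hdiff x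
        have e2 : |f y - fstar y| = h y := by rw [abs_sub_comm]; exact hdiff y
        calc kern σe σt σf (x, nX x, f x) (y, nX y, f y)
              - kern σe σt σf (x, nX x, fstar x) (y, nX y, fstar y)
            ≤ |kern σe σt σf (x, nX x, f x) (y, nX y, f y)
              - kern σe σt σf (x, nX x, fstar x) (y, nX y, fstar y)| := le_abs_self _
          _ ≤ 2 / σf * (|f x - fstar x| + |f y - fstar y|) := hk
          _ = 2 / σf * (h x + h y) := by rw [e1, e2]
      refine hmono.trans_eq ?_
      rw [integral_const_mul]
      congr 1
      rw [integral_add (integrable_const (h x)) hh_int, integral_const, smul_eq_mul,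
        Measure.real, hνXuniv, ← hS]
    calc (∫ x, ∫ y, kern σe σt σf (x, nX x, f x) (y, nX y, f y) ∂νX ∂νX)
          - (∫ x, ∫ y, kern σe σt σf (x, nX x, fstar x) (y, nX y, fstar y) ∂νX ∂νX)
        = ∫ x, ((∫ y, kern σe σt σf (x, nX x, f x) (y, nX y, f y) ∂νX)
            - ∫ y, kern σe σt σf (x, nX x, fstar x) (y, nX y, fstar y) ∂νX) ∂νX :=
          (integral_sub hint1 hint2).symm
      _ ≤ ∫ x, 2 / σf * (a * h x + S) ∂νX :=
          integral_mono_ae (hint1.sub hint2)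
            (((hh_int.const_mul a).add (integrable_const S)).const_mul (2 / σf)) hbnd
      _ = 2 / σf * (a * S + a * S) := by
          rw [integral_const_mul, integral_add (hh_int.const_mul a) (integrable_const S),
            integral_const_mul, integral_const, smul_eq_mul, Measure.real, hνXuniv, ← hS]
  -- comparison of the XY double integrals
  have hT2 : (∫ x, ∫ y, kern σe σt σf (x, nX x, fstar x) (y, nY y, g y) ∂νY ∂νX)
      - (∫ x, ∫ y, kern σe σt σf (x, nX x, f x) (y, nY y, g y) ∂νY ∂νX)
      ≤ 2 / σf * (b * S) := by
    have hint1 := houtXY fstar hfm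
    have hint2 := houtXY f hfm'
    have hbnd : ∀ᵐ x ∂νX,
        (∫ y, kern σe σt σf (x, nX x, fstar x) (y, nY y, g y) ∂νY)
          - (∫ y, kern σe σt σf (x, nX x, f x) (y, nY y, g y) ∂νY)
        ≤ 2 / σf * b * h x := by
      filter_upwards [haeX] with x hx
      have h1 := hinnXY fstar hfm x hx
      have h2 := hinnXY f hfm' x hx
      rw [← integral_sub h1 h2]
      have hmono : (∫ y, (kern σe σt σf (x, nX x, fstar x) (y, nY y, g y)
            - kern σe σt σf (x, nX x, f x) (y, nY y, g y)) ∂νY)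
          ≤ ∫ y, (2 / σf * h x) ∂νY := by
        apply integral_mono_ae (h1.sub h2) (integrable_const _)
        filter_upwards [haeY] with y hy
        have hk := kern_diff σe σt σf hσe hσt hσf x y (nX x) (nY y)
          (hnX x hx) (hnY y hy) (fstar x) (g y) (f x) (g y)
        have e1 : |fstar x - f x| = h x := hdiff x
        calc kern σe σt σf (x, nX x, fstar x) (y, nY y, g y)
              - kern σe σt σf (x, nX x, f x) (y, nY y, g y)
            ≤ |kern σe σt σf (x, nX x, fstar x) (y, nY y, g y)
              - kern σe σt σf (x, nX x, f x) (y, nY y, g y)| := le_abs_self _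
          _ ≤ 2 / σf * (|fstar x - f x| + |g y - g y|) := hk
          _ = 2 / σf * h x := by rw [e1, sub_self, abs_zero, add_zero]
      refine hmono.trans_eq ?_
      rw [integral_const, smul_eq_mul, Measure.real, hνYuniv]
      ring
    calc (∫ x, ∫ y, kern σe σt σf (x, nX x, fstar x) (y, nY y, g y) ∂νY ∂νX)
          - (∫ x, ∫ y, kern σe σt σf (x, nX x, f x) (y, nY y, g y) ∂νY ∂νX)
        = ∫ x, ((∫ y, kern σe σt σf (x, nX x, fstar x) (y, nY y, g y) ∂νY)
            - ∫ y, kern σe σt σf (x, nX x, f x) (y, nY y, g y) ∂νY) ∂νX :=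
          (integral_sub hint1 hint2).symm
      _ ≤ ∫ x, 2 / σf * b * h x ∂νX :=
          integral_mono_ae (hint1.sub hint2) (hh_int.const_mul (2 / σf * b)) hbnd
      _ = 2 / σf * (b * S) := by rw [integral_const_mul, ← hS]; ring
  -- use minimality
  have hE := hmin f hfm' hfmem2
  rw [energyL2, energyL2] at hE
  rw [← hνX, ← hνY] at hE
  have hSle : S ≤ 0 := by
    have hlin : γf / 2 * ((∫ x, fstar x ^ 2 ∂νX) - ∫ x, f x ^ 2 ∂νX)
        ≤ γW / 2 *
          (((∫ x, ∫ y, kern σe σt σf (x, nX x, f x) (y, nX y, f y) ∂νX ∂νX)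
              - ∫ x, ∫ y, kern σe σt σf (x, nX x, fstar x) (y, nX y, fstar y) ∂νX ∂νX)
            + 2 * ((∫ x, ∫ y, kern σe σt σf (x, nX x, fstar x) (y, nY y, g y) ∂νY ∂νX)
              - ∫ x, ∫ y, kern σe σt σf (x, nX x, f x) (y, nY y, g y) ∂νY ∂νX)) := by
      linarith [hE]
    have hLHS : γf * M * S ≤ γf / 2 * ((∫ x, fstar x ^ 2 ∂νX) - ∫ x, f x ^ 2 ∂νX) := by
      nlinarith [key1, hγf.le]
    have hRHS : γW / 2 *
          (((∫ x, ∫ y, kern σe σt σf (x, nX x, f x) (y, nX y, f y) ∂νX ∂νX)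
              - ∫ x, ∫ y, kern σe σt σf (x, nX x, fstar x) (y, nX y, fstar y) ∂νX ∂νX)
            + 2 * ((∫ x, ∫ y, kern σe σt σf (x, nX x, fstar x) (y, nY y, g y) ∂νY ∂νX)
              - ∫ x, ∫ y, kern σe σt σf (x, nX x, f x) (y, nY y, g y) ∂νY ∂νX))
        ≤ γW / 2 * (2 / σf * (a * S + a * S) + 2 * (2 / σf * (b * S))) := by
      nlinarith [hT1, hT2, hγW.le]
    have hgfM : γf * M = 3 / σf * γW * (a + b) := by
      rw [hM]; field_simp
    have hfinal : 3 / σf * γW * (a + b) * S ≤ 2 / σf * γW * (a + b) * S := by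
      have : γW / 2 * (2 / σf * (a * S + a * S) + 2 * (2 / σf * (b * S)))
          = 2 / σf * γW * (a + b) * S := by ring
      rw [← hgfM]
      linarith [hLHS.trans (hlin.trans (hRHS.trans_eq this))]
    by_contra hcon
    push_neg at hcon
    have hc : 0 < 1 / σf * γW * (a + b) :=
      mul_pos (mul_pos (by positivity) hγW) hab'
    have h2 := mul_pos hc hcon
    have h3 : (1:ℝ) / σf * γW * (a + b) * S ≤ 0 := by linear_combination hfinal
    linarith
  have hSz : (∫ x, h x ∂νX) = 0 := le_antisymm (hS ▸ hSle) (hS ▸ hS0)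
  have hhz : h =ᵐ[νX] 0 :=
    (integral_eq_zero_iff_of_nonneg_ae (Filter.Eventually.of_forall hh0) hh_int).mp hSz
  filter_upwards [hhz] with x hx
  have hx0 : max (|fstar x| - M) 0 = 0 := hx
  have hle : |fstar x| - M ≤ 0 := by
    by_contra hcon
    push_neg at hcon
    rw [max_eq_left hcon.le] at hx0
    linarith
  show |fstar x| ≤ M
  linarith
end
end
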